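/- Let A, B be unital superalgebras, P an A–B-superbimodule and Q a B–A-superbimodule. Define C_{m,n} = P⊗B^{⊗n}⊗Q⊗A^{⊗m}, let d'_{m,n}: C_{m,n} → C_{m-1,n} be the graded Hochschild differential of A with coefficients in the A-bimodule P⊗B^{⊗n}⊗Q, and let d''_{m,n}: C_{m,n} → C_{m,n-1} be (-1)^m times the conjugate by the cyclic permutation ω of the graded Hochschild differential of B with coefficients in Q⊗A^{⊗m}⊗P. Then d'd'' + d''d' = 0, so (C_{m,n}, d', d'') is a double complex. -/

import Mathlib

open PiTensorProduct MulOpposite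
open scoped TensorProduct

/-- The Koszul sign `(-1)^{ij}` for `Z₂`-degrees `i, j`. -/
def ksign (i j : ZMod 2) : ℤ := (-1) ^ (i.val * j.val)

/-- The inner face map on indexed families: multiply the `i`-th and `(i+1)`-st entries. -/
def mulFace {A : Type} [Mul A] {n : ℕ} (i : ℕ) (a : Fin (n + 1) → A) : Fin n → A :=
  fun k =>
    if (k : ℕ) < i then a (Fin.castSucc k)
    else if (k : ℕ) = i then a (Fin.castSucc k) * a (Fin.succ k)
    else a (Fin.succ k)

open PiTensorProduct MulOpposite
open scoped TensorProduct

def addFace {n : ℕ} (i : ℕ) (d : Fin (n + 1) → ZMod 2) : Fin n → ZMod 2 :=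
  fun k =>
    if (k : ℕ) < i then d (Fin.castSucc k)
    else if (k : ℕ) = i then d (Fin.castSucc k) + d (Fin.succ k)
    else d (Fin.succ k)

lemma addFace_eq {n : ℕ} (j : Fin n) (d : Fin (n + 1) → ZMod 2) (k : Fin n) :
    addFace (j : ℕ) d k = d (Fin.succAbove (Fin.succ j) k) + if k = j then d (Fin.succ j) else 0 := by
  have hsa : Fin.succAbove (Fin.succ j) k = if (k : ℕ) < (j : ℕ) + 1 then k.castSucc else k.succ := by
    rw [Fin.succAbove]
    simp [Fin.lt_def]
  rcases lt_trichotomy (k : ℕ) (j : ℕ) with h | h | h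
  · have h2 : k ≠ j := by simp [Fin.ext_iff]; omega
    rw [hsa]
    simp [addFace, h, h2, show (k : ℕ) < (j : ℕ) + 1 by omega]
  · have h2 : k = j := by simp [Fin.ext_iff]; omega
    subst h2
    rw [hsa]
    simp [addFace, show ¬ (k:ℕ) < (k:ℕ) by omega]
  · have h2 : k ≠ j := by simp [Fin.ext_iff]; omega
    rw [hsa]
    simp [addFace, h2, show ¬ (k : ℕ) < (j : ℕ) by omega, show (k:ℕ) ≠ (j:ℕ) by omega,
      show ¬ (k : ℕ) < (j : ℕ) + 1 by omega]

lemma sum_addFace {n : ℕ} (j : Fin n) (d : Fin (n + 1) → ZMod 2) :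
    ∑ k, addFace (j : ℕ) d k = ∑ k, d k := by
  rw [Fin.sum_univ_succAbove d (Fin.succ j)]
  rw [Finset.sum_congr rfl fun k _ => addFace_eq j d k, Finset.sum_add_distrib,
    Finset.sum_ite_eq' Finset.univ j (fun _ => d (Fin.succ j))]
  simp [add_comm]

lemma mulFace_mem {R A : Type} [CommRing R] [Ring A] [Algebra R A]
    (𝒜 : ZMod 2 → Submodule R A) [GradedAlgebra 𝒜] {n : ℕ} (i : ℕ)
    (d : Fin (n + 1) → ZMod 2) (a : Fin (n + 1) → A) (ha : ∀ k, a k ∈ 𝒜 (d k)) (k : Fin n) :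
    mulFace i a k ∈ 𝒜 (addFace i d k) := by
  unfold mulFace addFace
  split_ifs with h1 h2
  · exact ha _
  · exact SetLike.mul_mem_graded (ha _) (ha _)
  · exact ha _

lemma span_homog_top {R M : Type} [CommRing R] [AddCommGroup M] [Module R M]
    (𝒢 : ZMod 2 → Submodule R M) [DirectSum.Decomposition 𝒢] :
    Submodule.span R {x : M | ∃ i, x ∈ 𝒢 i} = ⊤ := by
  rw [eq_top_iff]
  intro x _
  classical
  rw [← DirectSum.sum_support_decompose 𝒢 x]
  exact Submodule.sum_mem _ fun i _ =>
    Submodule.subset_span ⟨i, ((DirectSum.decompose 𝒢) x i).2⟩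

lemma span_tprod_homog_top {R A : Type} [CommRing R] [Ring A] [Algebra R A]
    (𝒜 : ZMod 2 → Submodule R A) [GradedAlgebra 𝒜] (m : ℕ) :
    Submodule.span R {x : TensorPower R m A |
      ∃ (dg : Fin m → ZMod 2) (a : Fin m → A), (∀ k, a k ∈ 𝒜 (dg k)) ∧ tprod R a = x} = ⊤ := by
  rw [eq_top_iff, ← PiTensorProduct.span_tprod_eq_top, Submodule.span_le]
  rintro _ ⟨a, rfl⟩
  classical
  have ha : ∀ k, a k = ∑ i : ZMod 2, ((DirectSum.decompose 𝒜 (a k)) i : A) := by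
    intro k
    symm
    conv_rhs => rw [← DirectSum.sum_support_decompose 𝒜 (a k)]
    symm
    apply Finset.sum_subset (Finset.subset_univ _)
    intro i _ hi
    rw [DFinsupp.notMem_support_iff.mp hi]
    rfl
  have : tprod R a = tprod R (fun k => ∑ i ∈ Finset.univ, ((DirectSum.decompose 𝒜 (a k)) i : A)) := by
    congr 1; funext k; exact ha k
  rw [this, MultilinearMap.map_sum_finset (PiTensorProduct.tprod R) _ (fun _ => (Finset.univ : Finset (ZMod 2)))]
  exact Submodule.sum_mem _ fun r _ =>
    Submodule.subset_span ⟨r, _, fun k => ((DirectSum.decompose 𝒜 (a k)) (r k)).2, rfl⟩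

lemma span_tmul_top {R M N : Type} [CommRing R] [AddCommGroup M] [Module R M]
    [AddCommGroup N] [Module R N] (sM : Set M) (sN : Set N)
    (hM : Submodule.span R sM = ⊤) (hN : Submodule.span R sN = ⊤) :
    Submodule.span R {x : M ⊗[R] N | ∃ y ∈ sM, ∃ z ∈ sN, y ⊗ₜ[R] z = x} = ⊤ := by
  rw [eq_top_iff]
  rintro x -
  induction x with
  | zero => exact Submodule.zero_mem _
  | add x y hx hy => exact Submodule.add_mem _ hx hy
  | tmul y z =>
    have hy : y ∈ Submodule.span R sM := hM ▸ Submodule.mem_top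
    have hz : z ∈ Submodule.span R sN := hN ▸ Submodule.mem_top
    induction hy using Submodule.span_induction with
    | mem y hy =>
      induction hz using Submodule.span_induction with
      | mem z hz => exact Submodule.subset_span ⟨_, hy, _, hz, rfl⟩
      | zero => rw [TensorProduct.tmul_zero]; exact Submodule.zero_mem _
      | add z w hz hw hz' hw' => rw [TensorProduct.tmul_add]; exact Submodule.add_mem _ hz' hw'
      | smul r z hz hz' => rw [TensorProduct.tmul_smul]; exact Submodule.smul_mem _ r hz'
    | zero => rw [TensorProduct.zero_tmul]; exact Submodule.zero_mem _
    | add y w hy hw hy' hw' => rw [TensorProduct.add_tmul]; exact Submodule.add_mem _ hy' hw'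
    | smul r y hy hy' => rw [← TensorProduct.smul_tmul']; exact Submodule.smul_mem _ r hy'

lemma hcol_gen {V : Type} [AddCommGroup V] {m n : ℕ} (s c c' : ℤ) (e : Fin m → ℤ)
    (f : Fin n → ℤ) (S W K M : V) (U L : Fin m → V) (F H : Fin n → V) (G : Fin n → Fin m → V) :
    s • (S + (∑ j, f j • F j) + c' • K) + (∑ i, e i • (s • (U i + (∑ j, f j • G j i) + c' • L i)))
      + c • (s • (W + (∑ j, f j • H j) + c' • M)) =
    s • ((S + (∑ i, e i • U i) + c • W) + (∑ j, f j • (F j + (∑ i, e i • G j i) + c • H j))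
      + c' • (K + (∑ i, e i • L i) + c • M)) := by
  simp only [smul_add, Finset.smul_sum, smul_smul, Finset.sum_add_distrib]
  rw [Finset.sum_comm]
  simp only [mul_comm, mul_left_comm, mul_assoc]
  abel

set_option maxHeartbeats 3200000

/-- For unital superalgebras `A, B`, an `A–B`-superbimodule `P` and a
`B–A`-superbimodule `Q`, set `C_{m,n} = P⊗B^{⊗n}⊗Q⊗A^{⊗m}`; let `d'` be the graded
Hochschild differential of `A` with coefficients in `P⊗B^{⊗n}⊗Q` and `d''` be `(-1)^m`
times the (cyclically transported) graded Hochschild differential of `B` with coefficients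
in `Q⊗A^{⊗m}⊗P`.  Then `d'd'' + d''d' = 0`, so `(C_{m,n}, d', d'')` is a double complex. -/
theorem double_complex_anticommute
    {R A B P Q : Type} [CommRing R] [Ring A] [Algebra R A] [Ring B] [Algebra R B]
    [AddCommGroup P] [Module R P] [Module A P] [Module Bᵐᵒᵖ P]
    [IsScalarTower R A P] [IsScalarTower R Bᵐᵒᵖ P] [SMulCommClass A Bᵐᵒᵖ P]
    [AddCommGroup Q] [Module R Q] [Module B Q] [Module Aᵐᵒᵖ Q]
    [IsScalarTower R B Q] [IsScalarTower R Aᵐᵒᵖ Q] [SMulCommClass B Aᵐᵒᵖ Q]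
    (𝒜 : ZMod 2 → Submodule R A) [GradedAlgebra 𝒜]
    (ℬ : ZMod 2 → Submodule R B) [GradedAlgebra ℬ]
    (𝒢P : ZMod 2 → Submodule R P) [DirectSum.Decomposition 𝒢P]
    (𝒢Q : ZMod 2 → Submodule R Q) [DirectSum.Decomposition 𝒢Q]
    (hPl : ∀ (i j : ZMod 2) (a : A) (p : P), a ∈ 𝒜 i → p ∈ 𝒢P j → a • p ∈ 𝒢P (i + j))
    (hPr : ∀ (i j : ZMod 2) (b : B) (p : P), b ∈ ℬ i → p ∈ 𝒢P j → op b • p ∈ 𝒢P (j + i))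
    (hQl : ∀ (i j : ZMod 2) (b : B) (q : Q), b ∈ ℬ i → q ∈ 𝒢Q j → b • q ∈ 𝒢Q (i + j))
    (hQr : ∀ (i j : ZMod 2) (a : A) (q : Q), a ∈ 𝒜 i → q ∈ 𝒢Q j → op a • q ∈ 𝒢Q (j + i))
    (d' : ∀ m n : ℕ, (((P ⊗[R] TensorPower R n B) ⊗[R] Q) ⊗[R] TensorPower R (m + 1) A) →ₗ[R]
      (((P ⊗[R] TensorPower R n B) ⊗[R] Q) ⊗[R] TensorPower R m A))
    (d'' : ∀ m n : ℕ, (((P ⊗[R] TensorPower R (n + 1) B) ⊗[R] Q) ⊗[R] TensorPower R m A) →ₗ[R]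
      (((P ⊗[R] TensorPower R n B) ⊗[R] Q) ⊗[R] TensorPower R m A))
    (hd' : ∀ (m n : ℕ) (dp dq : ZMod 2) (degb : Fin n → ZMod 2) (dega : Fin (m + 1) → ZMod 2)
      (p : P) (q : Q) (b : Fin n → B) (a : Fin (m + 1) → A),
      p ∈ 𝒢P dp → q ∈ 𝒢Q dq → (∀ k, b k ∈ ℬ (degb k)) → (∀ k, a k ∈ 𝒜 (dega k)) →
      d' m n (((p ⊗ₜ[R] tprod R b) ⊗ₜ[R] q) ⊗ₜ[R] tprod R a) =
        ((p ⊗ₜ[R] tprod R b) ⊗ₜ[R] (op (a 0) • q)) ⊗ₜ[R] tprod R (Fin.tail a)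
        + ∑ i : Fin m, ((-1 : ℤ) ^ ((i : ℕ) + 1)) •
            (((p ⊗ₜ[R] tprod R b) ⊗ₜ[R] q) ⊗ₜ[R] tprod R (mulFace (i : ℕ) a))
        + ((-1 : ℤ) ^ (m + 1) *
            ksign (dega (Fin.last m))
              (dp + (∑ k, degb k) + dq + ∑ j : Fin m, dega (Fin.castSucc j))) •
            ((((a (Fin.last m) • p) ⊗ₜ[R] tprod R b) ⊗ₜ[R] q) ⊗ₜ[R] tprod R (Fin.init a)))
    (hd'' : ∀ (m n : ℕ) (dp dq : ZMod 2) (degb : Fin (n + 1) → ZMod 2) (dega : Fin m → ZMod 2)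
      (p : P) (q : Q) (b : Fin (n + 1) → B) (a : Fin m → A),
      p ∈ 𝒢P dp → q ∈ 𝒢Q dq → (∀ k, b k ∈ ℬ (degb k)) → (∀ k, a k ∈ 𝒜 (dega k)) →
      d'' m n (((p ⊗ₜ[R] tprod R b) ⊗ₜ[R] q) ⊗ₜ[R] tprod R a) =
        ((-1 : ℤ) ^ m) •
          ((((op (b 0) • p) ⊗ₜ[R] tprod R (Fin.tail b)) ⊗ₜ[R] q) ⊗ₜ[R] tprod R a
          + ∑ j : Fin n, ((-1 : ℤ) ^ ((j : ℕ) + 1)) •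
              (((p ⊗ₜ[R] tprod R (mulFace (j : ℕ) b)) ⊗ₜ[R] q) ⊗ₜ[R] tprod R a)
          + ((-1 : ℤ) ^ (n + 1) *
              ksign (degb (Fin.last n))
                (dq + (∑ k, dega k) + dp + ∑ j : Fin n, degb (Fin.castSucc j))) •
              (((p ⊗ₜ[R] tprod R (Fin.init b)) ⊗ₜ[R] (b (Fin.last n) • q)) ⊗ₜ[R] tprod R a))) :
    ∀ m n : ℕ, d' m n ∘ₗ d'' (m + 1) n + d'' m n ∘ₗ d' m (n + 1) = 0 := by
  intro m n
  classical
  have hspan : Submodule.span R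
      {x : ((P ⊗[R] TensorPower R (n + 1) B) ⊗[R] Q) ⊗[R] TensorPower R (m + 1) A |
        ∃ (dp dq : ZMod 2) (degb : Fin (n + 1) → ZMod 2) (dega : Fin (m + 1) → ZMod 2)
          (p : P) (q : Q) (b : Fin (n + 1) → B) (a : Fin (m + 1) → A),
          p ∈ 𝒢P dp ∧ q ∈ 𝒢Q dq ∧ (∀ k, b k ∈ ℬ (degb k)) ∧ (∀ k, a k ∈ 𝒜 (dega k)) ∧
          ((p ⊗ₜ[R] tprod R b) ⊗ₜ[R] q) ⊗ₜ[R] tprod R a = x} = ⊤ := by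
    have h1 := span_tmul_top _ _ (span_homog_top 𝒢P) (span_tprod_homog_top ℬ (n + 1))
    have h2 := span_tmul_top _ _ h1 (span_homog_top 𝒢Q)
    have h3 := span_tmul_top (R := R) (M := (P ⊗[R] TensorPower R (n + 1) B) ⊗[R] Q)
      (N := TensorPower R (m + 1) A) _ _ h2 (span_tprod_homog_top 𝒜 (m + 1))
    refine le_antisymm le_top ?_
    rw [← h3]
    apply Submodule.span_mono
    rintro x ⟨y2, ⟨y1, ⟨p, ⟨dp, hp⟩, zb, ⟨degb, b, hb, rfl⟩, rfl⟩, zq, ⟨dq, hq⟩, rfl⟩,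
      za, ⟨dega, a, ha, rfl⟩, rfl⟩
    exact ⟨dp, dq, degb, dega, _, _, _, _, hp, hq, hb, ha, rfl⟩
  apply LinearMap.ext_on hspan
  rintro x ⟨dp, dq, degb, dega, p, q, b, a, hp, hq, hb, ha, rfl⟩
  simp only [LinearMap.add_apply, LinearMap.comp_apply, LinearMap.zero_apply]
  have hX1 : d' m n (((((op (b 0) • p) ⊗ₜ[R] tprod R (Fin.tail b)) ⊗ₜ[R] q) ⊗ₜ[R] tprod R a)) =
      (((op (b 0) • p) ⊗ₜ[R] tprod R (Fin.tail b)) ⊗ₜ[R] (op (a 0) • q)) ⊗ₜ[R] tprod R (Fin.tail a)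
      + ∑ i : Fin m, ((-1 : ℤ) ^ ((i : ℕ) + 1)) • ((((op (b 0) • p) ⊗ₜ[R] tprod R (Fin.tail b)) ⊗ₜ[R] q) ⊗ₜ[R] tprod R (mulFace (i : ℕ) a))
      + ((-1 : ℤ) ^ (m + 1) * ksign (dega (Fin.last m)) (dp + (∑ k, degb k) + dq + ∑ j : Fin m, dega (Fin.castSucc j))) • ((((op (b 0) • a (Fin.last m) • p) ⊗ₜ[R] tprod R (Fin.tail b)) ⊗ₜ[R] q) ⊗ₜ[R] tprod R (Fin.init a)) := by
    rw [hd' m n (dp + degb 0) dq (Fin.tail degb) dega (op (b 0) • p) q (Fin.tail b) a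
        (hPr (degb 0) dp (b 0) p (hb 0) hp) hq (fun k => hb k.succ) ha,
      smul_comm (a (Fin.last m)) (op (b 0)) p,
      show dp + degb 0 + (∑ k, Fin.tail degb k) = dp + ∑ k, degb k from by
        rw [show (∑ k, Fin.tail degb k) = ∑ k : Fin n, degb k.succ from rfl,
          Fin.sum_univ_succ degb]; ring]
  have hX2 : ∀ j : Fin n, d' m n (((p ⊗ₜ[R] tprod R (mulFace (j : ℕ) b)) ⊗ₜ[R] q) ⊗ₜ[R] tprod R a) =
      ((p ⊗ₜ[R] tprod R (mulFace (j : ℕ) b)) ⊗ₜ[R] (op (a 0) • q)) ⊗ₜ[R] tprod R (Fin.tail a)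
      + ∑ i : Fin m, ((-1 : ℤ) ^ ((i : ℕ) + 1)) • (((p ⊗ₜ[R] tprod R (mulFace (j : ℕ) b)) ⊗ₜ[R] q) ⊗ₜ[R] tprod R (mulFace (i : ℕ) a))
      + ((-1 : ℤ) ^ (m + 1) * ksign (dega (Fin.last m)) (dp + (∑ k, degb k) + dq + ∑ j : Fin m, dega (Fin.castSucc j))) • ((((a (Fin.last m) • p) ⊗ₜ[R] tprod R (mulFace (j : ℕ) b)) ⊗ₜ[R] q) ⊗ₜ[R] tprod R (Fin.init a)) := by
    intro j
    rw [hd' m n dp dq (addFace (j : ℕ) degb) dega p q (mulFace (j : ℕ) b) a hp hq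
        (mulFace_mem ℬ (j : ℕ) degb b hb) ha,
      sum_addFace j degb]
  have hX3 : d' m n (((p ⊗ₜ[R] tprod R (Fin.init b)) ⊗ₜ[R] (b (Fin.last n) • q)) ⊗ₜ[R] tprod R a) =
      ((p ⊗ₜ[R] tprod R (Fin.init b)) ⊗ₜ[R] (b (Fin.last n) • op (a 0) • q)) ⊗ₜ[R] tprod R (Fin.tail a)
      + ∑ i : Fin m, ((-1 : ℤ) ^ ((i : ℕ) + 1)) • (((p ⊗ₜ[R] tprod R (Fin.init b)) ⊗ₜ[R] (b (Fin.last n) • q)) ⊗ₜ[R] tprod R (mulFace (i : ℕ) a))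
      + ((-1 : ℤ) ^ (m + 1) * ksign (dega (Fin.last m)) (dp + (∑ k, degb k) + dq + ∑ j : Fin m, dega (Fin.castSucc j))) • ((((a (Fin.last m) • p) ⊗ₜ[R] tprod R (Fin.init b)) ⊗ₜ[R] (b (Fin.last n) • q)) ⊗ₜ[R] tprod R (Fin.init a)) := by
    rw [hd' m n dp (degb (Fin.last n) + dq) (Fin.init degb) dega p (b (Fin.last n) • q)
        (Fin.init b) a hp (hQl (degb (Fin.last n)) dq (b (Fin.last n)) q (hb (Fin.last n)) hq)
        (fun k => hb k.castSucc) ha,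
      ← smul_comm (b (Fin.last n)) (op (a 0)) q,
      show dp + (∑ k, Fin.init degb k) + (degb (Fin.last n) + dq) = dp + (∑ k, degb k) + dq from by
        rw [show (∑ k, Fin.init degb k) = ∑ k : Fin n, degb k.castSucc from rfl,
          Fin.sum_univ_castSucc degb]; ring]
  have hY1 : d'' m n (((p ⊗ₜ[R] tprod R b) ⊗ₜ[R] (op (a 0) • q)) ⊗ₜ[R] tprod R (Fin.tail a)) =
      ((-1 : ℤ) ^ m) •
        ((((op (b 0) • p) ⊗ₜ[R] tprod R (Fin.tail b)) ⊗ₜ[R] (op (a 0) • q)) ⊗ₜ[R] tprod R (Fin.tail a)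
        + ∑ j : Fin n, ((-1 : ℤ) ^ ((j : ℕ) + 1)) • (((p ⊗ₜ[R] tprod R (mulFace (j : ℕ) b)) ⊗ₜ[R] (op (a 0) • q)) ⊗ₜ[R] tprod R (Fin.tail a))
        + ((-1 : ℤ) ^ (n + 1) * ksign (degb (Fin.last n)) (dq + (∑ k, dega k) + dp + ∑ j : Fin n, degb (Fin.castSucc j))) • (((p ⊗ₜ[R] tprod R (Fin.init b)) ⊗ₜ[R] (b (Fin.last n) • op (a 0) • q)) ⊗ₜ[R] tprod R (Fin.tail a))) := by
    rw [hd'' m n dp (dq + dega 0) degb (Fin.tail dega) p (op (a 0) • q) b (Fin.tail a) hp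
        (hQr (dega 0) dq (a 0) q (ha 0) hq) hb (fun k => ha k.succ),
      show dq + dega 0 + (∑ k, Fin.tail dega k) = dq + ∑ k, dega k from by
        rw [show (∑ k, Fin.tail dega k) = ∑ k : Fin m, dega k.succ from rfl,
          Fin.sum_univ_succ dega]; ring]
  have hY2 : ∀ i : Fin m, d'' m n (((p ⊗ₜ[R] tprod R b) ⊗ₜ[R] q) ⊗ₜ[R] tprod R (mulFace (i : ℕ) a)) =
      ((-1 : ℤ) ^ m) •
        ((((op (b 0) • p) ⊗ₜ[R] tprod R (Fin.tail b)) ⊗ₜ[R] q) ⊗ₜ[R] tprod R (mulFace (i : ℕ) a)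
        + ∑ j : Fin n, ((-1 : ℤ) ^ ((j : ℕ) + 1)) • (((p ⊗ₜ[R] tprod R (mulFace (j : ℕ) b)) ⊗ₜ[R] q) ⊗ₜ[R] tprod R (mulFace (i : ℕ) a))
        + ((-1 : ℤ) ^ (n + 1) * ksign (degb (Fin.last n)) (dq + (∑ k, dega k) + dp + ∑ j : Fin n, degb (Fin.castSucc j))) • (((p ⊗ₜ[R] tprod R (Fin.init b)) ⊗ₜ[R] (b (Fin.last n) • q)) ⊗ₜ[R] tprod R (mulFace (i : ℕ) a))) := by
    intro i
    rw [hd'' m n dp dq degb (addFace (i : ℕ) dega) p q b (mulFace (i : ℕ) a) hp hq hb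
        (mulFace_mem 𝒜 (i : ℕ) dega a ha),
      sum_addFace i dega]
  have hY3 : d'' m n ((((a (Fin.last m) • p) ⊗ₜ[R] tprod R b) ⊗ₜ[R] q) ⊗ₜ[R] tprod R (Fin.init a)) =
      ((-1 : ℤ) ^ m) •
        ((((op (b 0) • a (Fin.last m) • p) ⊗ₜ[R] tprod R (Fin.tail b)) ⊗ₜ[R] q) ⊗ₜ[R] tprod R (Fin.init a)
        + ∑ j : Fin n, ((-1 : ℤ) ^ ((j : ℕ) + 1)) • ((((a (Fin.last m) • p) ⊗ₜ[R] tprod R (mulFace (j : ℕ) b)) ⊗ₜ[R] q) ⊗ₜ[R] tprod R (Fin.init a))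
        + ((-1 : ℤ) ^ (n + 1) * ksign (degb (Fin.last n)) (dq + (∑ k, dega k) + dp + ∑ j : Fin n, degb (Fin.castSucc j))) • ((((a (Fin.last m) • p) ⊗ₜ[R] tprod R (Fin.init b)) ⊗ₜ[R] (b (Fin.last n) • q)) ⊗ₜ[R] tprod R (Fin.init a))) := by
    rw [hd'' m n (dega (Fin.last m) + dp) dq degb (Fin.init dega) (a (Fin.last m) • p) q b
        (Fin.init a) (hPl (dega (Fin.last m)) dp (a (Fin.last m)) p (ha (Fin.last m)) hp) hq hb
        (fun k => ha k.castSucc),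
      show dq + (∑ k, Fin.init dega k) + (dega (Fin.last m) + dp) = dq + (∑ k, dega k) + dp from by
        rw [show (∑ k, Fin.init dega k) = ∑ k : Fin m, dega k.castSucc from rfl,
          Fin.sum_univ_castSucc dega]; ring]
  rw [hd'' (m + 1) n dp dq degb dega p q b a hp hq hb ha,
    hd' m (n + 1) dp dq degb dega p q b a hp hq hb ha]
  simp only [map_add, map_zsmul, map_sum, LinearMap.map_smul_of_tower]
  simp only [hX1, hX2, hX3, hY1, hY2, hY3]
  have hcol : ((-1 : ℤ) ^ m) • ((((op (b 0) • p) ⊗ₜ[R] tprod R (Fin.tail b)) ⊗ₜ[R] (op (a 0) • q)) ⊗ₜ[R] tprod R (Fin.tail a) + (∑ j : Fin n, ((-1 : ℤ) ^ ((j : ℕ) + 1)) • (((p ⊗ₜ[R] tprod R (mulFace (j : ℕ) b)) ⊗ₜ[R] (op (a 0) • q)) ⊗ₜ[R] tprod R (Fin.tail a))) + ((-1 : ℤ) ^ (n + 1) * ksign (degb (Fin.last n)) (dq + (∑ k, dega k) + dp + ∑ j : Fin n, degb (Fin.castSucc j))) • (((p ⊗ₜ[R] tprod R (Fin.init b)) ⊗ₜ[R]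 (b (Fin.last n) • op (a 0) • q)) ⊗ₜ[R] tprod R (Fin.tail a)))
      + (∑ i : Fin m, ((-1 : ℤ) ^ ((i : ℕ) + 1)) • (((-1 : ℤ) ^ m) • ((((op (b 0) • p) ⊗ₜ[R] tprod R (Fin.tail b)) ⊗ₜ[R] q) ⊗ₜ[R] tprod R (mulFace (i : ℕ) a) + (∑ j : Fin n, ((-1 : ℤ) ^ ((j : ℕ) + 1)) • (((p ⊗ₜ[R] tprod R (mulFace (j : ℕ) b)) ⊗ₜ[R] q) ⊗ₜ[R] tprod R (mulFace (i : ℕ) a))) + ((-1 : ℤ) ^ (n + 1) * ksign (degb (Fin.last n)) (dq + (∑ k, dega k) + dp + ∑ j : Fin n, degb (Fin.castSucc j))) • (((p ⊗ₜ[R] tprod R (Fin.init b)) ⊗ₜ[R] (b (Fin.last n) • q)) ⊗ₜ[R] tprod R (mulFace (i : ℕ) a)))))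
      + ((-1 : ℤ) ^ (m + 1) * ksign (dega (Fin.last m)) (dp + (∑ k, degb k) + dq + ∑ j : Fin m, dega (Fin.castSucc j))) • (((-1 : ℤ) ^ m) • ((((op (b 0) • a (Fin.last m) • p) ⊗ₜ[R] tprod R (Fin.tail b)) ⊗ₜ[R] q) ⊗ₜ[R] tprod R (Fin.init a) + (∑ j : Fin n, ((-1 : ℤ) ^ ((j : ℕ) + 1)) • ((((a (Fin.last m) • p) ⊗ₜ[R] tprod R (mulFace (j : ℕ) b)) ⊗ₜ[R] q) ⊗ₜ[R] tprod R (Fin.init a))) + ((-1 : ℤ) ^ (n + 1) * ksign (degb (Fin.last n)) (dq + (∑ k, dega k) + dp + ∑ j : Fin n, degb (Fin.castSucc j))) • ((((a (Fin.last m) • p) ⊗ₜ[R] tprod R (Fin.init b)) ⊗ₜ[R] (b (Fin.last n) • q)) ⊗ₜ[R] tprod R (Fin.init a)))) =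
      ((-1 : ℤ) ^ m) • (((((op (b 0) • p) ⊗ₜ[R] tprod R (Fin.tail b)) ⊗ₜ[R] (op (a 0) • q)) ⊗ₜ[R] tprod R (Fin.tail a) + (∑ i : Fin m, ((-1 : ℤ) ^ ((i : ℕ) + 1)) • ((((op (b 0) • p) ⊗ₜ[R] tprod R (Fin.tail b)) ⊗ₜ[R] q) ⊗ₜ[R] tprod R (mulFace (i : ℕ) a))) + ((-1 : ℤ) ^ (m + 1) * ksign (dega (Fin.last m)) (dp + (∑ k, degb k) + dq + ∑ j : Fin m, dega (Fin.castSucc j))) • ((((op (b 0) • a (Fin.last m) • p) ⊗ₜ[R] tprod R (Fin.tail b)) ⊗ₜ[R] q) ⊗ₜ[R] tprod R (Fin.init a)))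
      + (∑ j : Fin n, ((-1 : ℤ) ^ ((j : ℕ) + 1)) • (((p ⊗ₜ[R] tprod R (mulFace (j : ℕ) b)) ⊗ₜ[R] (op (a 0) • q)) ⊗ₜ[R] tprod R (Fin.tail a) + (∑ i : Fin m, ((-1 : ℤ) ^ ((i : ℕ) + 1)) • (((p ⊗ₜ[R] tprod R (mulFace (j : ℕ) b)) ⊗ₜ[R] q) ⊗ₜ[R] tprod R (mulFace (i : ℕ) a))) + ((-1 : ℤ) ^ (m + 1) * ksign (dega (Fin.last m)) (dp + (∑ k, degb k) + dq + ∑ j : Fin m, dega (Fin.castSucc j))) • ((((a (Fin.last m) • p) ⊗ₜ[R] tprod R (mulFace (j : ℕ) b)) ⊗ₜ[R] q) ⊗ₜ[R] tprod R (Fin.init a))))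
      + ((-1 : ℤ) ^ (n + 1) * ksign (degb (Fin.last n)) (dq + (∑ k, dega k) + dp + ∑ j : Fin n, degb (Fin.castSucc j))) • (((p ⊗ₜ[R] tprod R (Fin.init b)) ⊗ₜ[R] (b (Fin.last n) • op (a 0) • q)) ⊗ₜ[R] tprod R (Fin.tail a) + (∑ i : Fin m, ((-1 : ℤ) ^ ((i : ℕ) + 1)) • (((p ⊗ₜ[R] tprod R (Fin.init b)) ⊗ₜ[R] (b (Fin.last n) • q)) ⊗ₜ[R] tprod R (mulFace (i : ℕ) a))) + ((-1 : ℤ) ^ (m + 1) * ksign (dega (Fin.last m)) (dp + (∑ k, degb k) + dq + ∑ j : Fin m, dega (Fin.castSucc j))) • ((((a (Fin.last m) • p) ⊗ₜ[R] tprod R (Fin.init b)) ⊗ₜ[R] (b (Fin.last n) • q)) ⊗ₜ[R] tprod R (Fin.init a)))) := by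
    exact hcol_gen (V := ((P ⊗[R] TensorPower R n B) ⊗[R] Q) ⊗[R] TensorPower R m A) _ _ _ _ _ _ _ _ _ _ _ _ _ _
  rw [hcol, ← add_zsmul, show ((-1 : ℤ) ^ (m + 1) + (-1 : ℤ) ^ m) = 0 from by
    rw [pow_succ]; ring, zero_zsmul]
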